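/- Let X be a biquandle, As(X) its associated group acting on X on the right by ⋄ with x ⋄ ι'(y) = x ob y, and define φ : As(X) × X → X by φ(g,x) = x ⋄ g⁻¹. Then for all g ∈ As(X) and x, y ∈ X: φ(g · ι'(y), x ub y) = φ(g, x) * φ(g, y), where * is the operation of the quandle Q(X), a * b := (a ub b) ob⁻¹ b. -/

import Mathlib

/-- A biquandle: a set with two binary operations `ub` (under) and `ob` (over)
satisfying the biquandle axioms (BQ1), (BQ2), (BQ3). -/
structure Biquandle (X : Type*) where
  ub : X → X → X
  ob : X → X → X
  bq1 : ∀ x, ub x x = ob x x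
  ub_bij : ∀ y, Function.Bijective fun x => ub x y
  ob_bij : ∀ y, Function.Bijective fun x => ob x y
  H_bij : Function.Bijective fun p : X × X => (ob p.2 p.1, ub p.1 p.2)
  bq3_ub : ∀ x y z, ub (ub x y) (ub z y) = ub (ub x z) (ob y z)
  bq3_ob : ∀ x y z, ob (ob x y) (ob z y) = ob (ob x z) (ub y z)
  bq3_mix : ∀ x y z, ob (ub x y) (ub z y) = ub (ob x z) (ob y z)

/-- The inverse right translation `ub⁻¹`: `ubInv x y` is the unique `z` with `ub z y = x`. -/
noncomputable def Biquandle.ubInv {X : Type*} (B : Biquandle X) (x y : X) : X :=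
  (Equiv.ofBijective _ (B.ub_bij y)).symm x

/-- The inverse right translation `ob⁻¹`: `obInv x y` is the unique `z` with `ob z y = x`. -/
noncomputable def Biquandle.obInv {X : Type*} (B : Biquandle X) (x y : X) : X :=
  (Equiv.ofBijective _ (B.ob_bij y)).symm x

/-- The quandle operation of `Q(X)`: `a * b := (a ub b) ob⁻¹ b`. -/
noncomputable def Biquandle.q {X : Type*} (B : Biquandle X) (a b : X) : X :=
  B.obInv (B.ub a b) b

/-- Relations of the associated group `As(X)` of a biquandle:
`x · (y ob x) = y · (x ub y)`. -/
def Biquandle.asRels {X : Type*} (B : Biquandle X) : Set (FreeGroup X) :=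
  {r | ∃ x y : X, r = FreeGroup.of x * FreeGroup.of (B.ob y x) *
      (FreeGroup.of y * FreeGroup.of (B.ub x y))⁻¹}

/-- Relations of the associated group `As(Q(X))` of the quandle `Q(X)`:
`x · y = y · (x * y)`. -/
def Biquandle.qRels {X : Type*} (B : Biquandle X) : Set (FreeGroup X) :=
  {r | ∃ a b : X, r = FreeGroup.of a * FreeGroup.of b *
      (FreeGroup.of b * FreeGroup.of (B.q a b))⁻¹}


/-- With `φ(g,x) = x ⋄ g⁻¹`, for all `g ∈ As(X)` and `x, y ∈ X`:
`φ(g·ι'(y), x ub y) = φ(g,x) * φ(g,y)` in the quandle `Q(X)`. -/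
theorem phi_coloring_relation {X : Type*} (B : Biquandle X)
    (act : X → PresentedGroup B.asRels → X)
    (hact1 : ∀ x : X, act x 1 = x)
    (hactmul : ∀ (x : X) (g h : PresentedGroup B.asRels), act x (g * h) = act (act x g) h)
    (hactgen : ∀ x y : X, act x (PresentedGroup.of y) = B.ob x y) :
    ∀ (g : PresentedGroup B.asRels) (x y : X),
      act (B.ub x y) (g * PresentedGroup.of y)⁻¹ = B.q (act x g⁻¹) (act y g⁻¹) := by
  classical
  have obInv_ob : ∀ a w : X, B.obInv (B.ob a w) w = a := fun a w =>
    (Equiv.ofBijective _ (B.ob_bij w)).symm_apply_apply a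
  have ob_inj : ∀ w : X, Function.Injective (fun a => B.ob a w) := fun w => (B.ob_bij w).1
  have act_inv_of : ∀ (u z : X), B.ob (act u (PresentedGroup.of z)⁻¹) z = u := by
    intro u z
    have h := hactmul u (PresentedGroup.of z)⁻¹ (PresentedGroup.of z)
    rw [inv_mul_cancel, hact1, hactgen] at h
    exact h.symm
  have key : ∀ g : PresentedGroup B.asRels, ∀ u x y : X,
      B.ob u y = B.ub x y →
      B.ob (act u g) (act y g) = B.ub (act x g) (act y g) := by
    intro g
    refine QuotientGroup.induction_on g ?_
    intro f
    induction f using FreeGroup.induction_on with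
    | C1 =>
      intro u x y h
      show B.ob (act u 1) (act y 1) = B.ub (act x 1) (act y 1)
      simpa [hact1] using h
    | of z =>
      intro u x y h
      show B.ob (act u (PresentedGroup.of z)) (act y (PresentedGroup.of z))
          = B.ub (act x (PresentedGroup.of z)) (act y (PresentedGroup.of z))
      rw [hactgen, hactgen, hactgen, B.bq3_ob u z y, h]
      exact B.bq3_mix x y z
    | inv_of z _ =>
      intro u x y h
      show B.ob (act u (PresentedGroup.of z)⁻¹) (act y (PresentedGroup.of z)⁻¹)
          = B.ub (act x (PresentedGroup.of z)⁻¹) (act y (PresentedGroup.of z)⁻¹)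
      set u' := act u (PresentedGroup.of z)⁻¹ with hu'
      set x' := act x (PresentedGroup.of z)⁻¹ with hx'
      set y' := act y (PresentedGroup.of z)⁻¹ with hy'
      apply ob_inj (B.ub z y')
      show B.ob (B.ob u' y') (B.ub z y') = B.ob (B.ub x' y') (B.ub z y')
      rw [← B.bq3_ob u' z y', B.bq3_mix x' y' z]
      rw [act_inv_of u z, act_inv_of x z, act_inv_of y z, h]
    | mul a b ha hb =>
      intro u x y h
      show B.ob (act u (QuotientGroup.mk a * QuotientGroup.mk b))
            (act y (QuotientGroup.mk a * QuotientGroup.mk b))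
          = B.ub (act x (QuotientGroup.mk a * QuotientGroup.mk b))
            (act y (QuotientGroup.mk a * QuotientGroup.mk b))
      erw [hactmul, hactmul, hactmul]
      exact hb _ _ _ (ha u x y h)
  intro g x y
  have hu : B.ob (act (B.ub x y) (PresentedGroup.of y)⁻¹) y = B.ub x y := act_inv_of _ y
  have hk := key g⁻¹ (act (B.ub x y) (PresentedGroup.of y)⁻¹) x y hu
  rw [mul_inv_rev, hactmul, Biquandle.q, ← hk, obInv_ob]
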